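/- For every n ≥ 1 and every x ∈ {0,1}^n with |x| = Σ_{i=1}^n x_i, the Deutsch–Jozsa output probability π_1(x) = (n − 2|x|)²/n² satisfies π_1(x) = 1/n + (2/n²) · Σ_{1 ≤ i < j ≤ n} (−1)^{x_i + x_j}; hence its Fourier coefficients are α_0 = 1/n, α_b = 0 for |b| = 1, and α_b = 2/n² for each of the n(n−1)/2 strings b with |b| = 2 (and α_b = 0 for |b| > 2), so its Fourier 1-norm is L(π_1) = 1. -/

import Mathlib

noncomputable section

/-- The character `χ_b(x) = (−1)^{b·x}` on the Boolean cube, where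
`b·x = Σ_i b_i x_i`. -/
def chi {n : ℕ} (b x : Fin n → Bool) : ℝ :=
  (-1 : ℝ) ^ (∑ i, if b i && x i then 1 else 0 : ℕ)

/-- The Fourier coefficient `α_b = 2^{−n} Σ_x f(x) χ_b(x)` of `f : {0,1}^n → ℝ`. -/
def boolFourierCoeff {n : ℕ} (f : (Fin n → Bool) → ℝ) (b : Fin n → Bool) : ℝ :=
  (2 ^ n : ℝ)⁻¹ * ∑ x, f x * chi b x

/-- The Fourier 1-norm `L(f) = Σ_b |α_b|`. -/
def fourierL1 {n : ℕ} (f : (Fin n → Bool) → ℝ) : ℝ :=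
  ∑ b, |boolFourierCoeff f b|


lemma chi_eq_prod {n : ℕ} (b x : Fin n → Bool) :
    chi b x = ∏ i, (-1 : ℝ) ^ (if b i && x i then 1 else 0 : ℕ) := by
  rw [chi, Finset.prod_pow_eq_pow_sum]

lemma sum_chi_mul {n : ℕ} (a b : Fin n → Bool) :
    ∑ x : Fin n → Bool, chi a x * chi b x = if a = b then (2:ℝ)^n else 0 := by
  have h1 : ∀ x : Fin n → Bool, chi a x * chi b x =
      ∏ i, ((-1 : ℝ) ^ (if a i && x i then 1 else 0 : ℕ) *
            (-1 : ℝ) ^ (if b i && x i then 1 else 0 : ℕ)) := by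
    intro x
    rw [chi_eq_prod, chi_eq_prod, Finset.prod_mul_distrib]
  calc ∑ x : Fin n → Bool, chi a x * chi b x
      = ∑ x : Fin n → Bool, ∏ i, ((-1 : ℝ) ^ (if a i && x i then 1 else 0 : ℕ) *
            (-1 : ℝ) ^ (if b i && x i then 1 else 0 : ℕ)) := by
        exact Finset.sum_congr rfl fun x _ => h1 x
    _ = ∏ i, ∑ t : Bool, ((-1 : ℝ) ^ (if a i && t then 1 else 0 : ℕ) *
            (-1 : ℝ) ^ (if b i && t then 1 else 0 : ℕ)) := by
        rw [Fintype.prod_sum]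
    _ = ∏ i, (if a i = b i then (2:ℝ) else 0) := by
        refine Finset.prod_congr rfl fun i _ => ?_
        cases ha : a i <;> cases hb : b i <;> simp [Fintype.sum_bool] <;> norm_num
    _ = if a = b then (2:ℝ)^n else 0 := by
        by_cases h : a = b
        · subst h; simp [Finset.prod_const, Finset.card_univ]
        · rw [if_neg h]
          obtain ⟨i, hi⟩ := Function.ne_iff.mp h
          exact Finset.prod_eq_zero (Finset.mem_univ i) (by simp [hi])

lemma chi_zero {n : ℕ} (x : Fin n → Bool) : chi (fun _ => false) x = 1 := by
  simp [chi]

lemma sum_chi {n : ℕ} (b : Fin n → Bool) :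
    ∑ x : Fin n → Bool, chi b x = if (fun _ => false) = b then (2:ℝ)^n else 0 := by
  rw [← sum_chi_mul]
  exact Finset.sum_congr rfl fun x _ => by rw [chi_zero, one_mul]

def bp {n : ℕ} (p : Fin n × Fin n) : Fin n → Bool :=
  fun i => decide (i = p.1) || decide (i = p.2)

lemma bp_self1 {n : ℕ} (p : Fin n × Fin n) : bp p p.1 = true := by simp [bp]
lemma bp_self2 {n : ℕ} (p : Fin n × Fin n) : bp p p.2 = true := by simp [bp]

lemma sum_pair_support {n : ℕ} (p : Fin n × Fin n) (hne : p.1 ≠ p.2)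
    (f : Fin n → ℕ) (hf : ∀ i, bp p i = false → f i = 0) :
    ∑ i, f i = f p.1 + f p.2 := by
  have h : ∑ i, f i = ∑ i ∈ ({p.1, p.2} : Finset (Fin n)), f i := by
    refine (Finset.sum_subset (Finset.subset_univ _) ?_).symm
    intro i _ hi
    refine hf i ?_
    simp only [Finset.mem_insert, Finset.mem_singleton, not_or] at hi
    simp [bp, hi.1, hi.2]
  rw [h, Finset.sum_pair hne]

lemma chi_bp {n : ℕ} (p : Fin n × Fin n) (hne : p.1 ≠ p.2) (x : Fin n → Bool) :
    chi (bp p) x = (-1 : ℝ) ^ ((if x p.1 then 1 else 0) + (if x p.2 then 1 else 0) : ℕ) := by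
  rw [chi]
  congr 1
  rw [sum_pair_support p hne _ (fun i hi => by simp [hi])]
  rw [bp_self1, bp_self2]
  simp

lemma weight_bp {n : ℕ} (p : Fin n × Fin n) (hne : p.1 ≠ p.2) :
    (∑ i, if bp p i then 1 else 0 : ℕ) = 2 := by
  rw [sum_pair_support p hne _ (fun i hi => by simp [hi])]
  rw [bp_self1, bp_self2]
  simp

lemma bp_inj {n : ℕ} (p q : Fin n × Fin n) (hp : p.1 < p.2) (hq : q.1 < q.2)
    (h : bp p = bp q) : p = q := by
  have key : ∀ i, (i = p.1 ∨ i = p.2) ↔ (i = q.1 ∨ i = q.2) := by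
    intro i
    have := congrFun h i
    simp only [bp, Bool.or_eq_true, decide_eq_true_eq] at this ⊢
    constructor
    · intro hi
      have : (decide (i = q.1) || decide (i = q.2)) = true := by
        rw [← this]; simp [hi]
      simpa using this
    · intro hi
      have h2 : (decide (i = p.1) || decide (i = p.2)) = true := by
        rw [this]; simp [hi]
      simpa using h2
  have hq1 := (key q.1).mpr (Or.inl rfl)
  have hq2 := (key q.2).mpr (Or.inr rfl)
  have hp1 := (key p.1).mp (Or.inl rfl)
  have hp2 := (key p.2).mp (Or.inr rfl)
  rcases hq1 with h11 | h12
  · rcases hq2 with h21 | h22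
    · exfalso; rw [h21, ← h11] at hq; exact lt_irrefl _ hq
    · exact (Prod.ext h11 h22).symm
  · exfalso
    rcases hq2 with h21 | h22
    · rw [h12, h21] at hq; exact absurd hq (not_lt.mpr hp.le)
    · rw [h22, ← h12] at hq; exact lt_irrefl _ hq

def PP (n : ℕ) : Finset (Fin n × Fin n) :=
  Finset.univ.filter (fun p : Fin n × Fin n => p.1 < p.2)

lemma decomp (n : ℕ) (hn : 1 ≤ n) (x : Fin n → Bool) :
    ((n : ℝ) - 2 * ((∑ i, if x i then 1 else 0 : ℕ) : ℝ)) ^ 2 / (n : ℝ) ^ 2 =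
      1 / (n : ℝ) + (2 / (n : ℝ) ^ 2) * ∑ p ∈ PP n, chi (bp p) x := by
  have hn0 : (n : ℝ) ≠ 0 := by positivity
  set a : Fin n → ℝ := fun i => (-1 : ℝ) ^ (if x i then 1 else 0 : ℕ) with ha_def
  have ha : ∀ i, a i = 1 - 2 * (if x i then (1:ℝ) else 0) := by
    intro i; cases hx : x i <;> simp [ha_def, hx] <;> norm_num
  have haa : ∀ i, a i * a i = 1 := by
    intro i; cases hx : x i <;> simp [ha_def, hx]
  have hsum : (n : ℝ) - 2 * ((∑ i, if x i then 1 else 0 : ℕ) : ℝ) = ∑ i, a i := by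
    have hc : ((∑ i, if x i then 1 else 0 : ℕ) : ℝ) =
        ∑ i, (if x i then (1:ℝ) else 0) := by push_cast; rfl
    rw [hc]
    rw [Finset.sum_congr rfl (fun i _ => ha i), Finset.sum_sub_distrib,
      Finset.sum_const, Finset.card_univ, ← Finset.mul_sum]
    simp
  have e1 : (∑ i, a i) ^ 2 = ∑ p : Fin n × Fin n, a p.1 * a p.2 := by
    rw [sq, Finset.sum_mul_sum, ← Fintype.sum_prod_type']
  have e2 := Finset.sum_filter_add_sum_filter_not (Finset.univ : Finset (Fin n × Fin n))
    (fun p => p.1 = p.2) (fun p => a p.1 * a p.2)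
  have e3 := Finset.sum_filter_add_sum_filter_not
    ((Finset.univ : Finset (Fin n × Fin n)).filter (fun p => ¬ p.1 = p.2))
    (fun p => p.1 < p.2) (fun p => a p.1 * a p.2)
  have hdiag : ∑ p ∈ Finset.univ.filter (fun p : Fin n × Fin n => p.1 = p.2),
      a p.1 * a p.2 = (n : ℝ) := by
    rw [Finset.sum_congr rfl (fun p hp => by
      rw [(Finset.mem_filter.mp hp).2, haa])]
    rw [Finset.sum_const, nsmul_eq_mul, mul_one]
    congr 1
    rw [Finset.card_filter]
    rw [Fintype.sum_prod_type]
    simp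
  have hf1 : ((Finset.univ : Finset (Fin n × Fin n)).filter
      (fun p => ¬ p.1 = p.2)).filter (fun p => p.1 < p.2) = PP n := by
    rw [Finset.filter_filter]
    apply Finset.filter_congr
    intro p _
    constructor
    · exact fun h => h.2
    · exact fun h => ⟨ne_of_lt h, h⟩
  have hf2 : ((Finset.univ : Finset (Fin n × Fin n)).filter
      (fun p => ¬ p.1 = p.2)).filter (fun p => ¬ p.1 < p.2) =
      Finset.univ.filter (fun p : Fin n × Fin n => p.2 < p.1) := by
    rw [Finset.filter_filter]
    apply Finset.filter_congr
    intro p _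
    constructor
    · rintro ⟨hne, hnlt⟩
      exact lt_of_le_of_ne (not_lt.mp hnlt) (fun h => hne h.symm)
    · exact fun h => ⟨fun he => absurd h (he ▸ lt_irrefl _), not_lt.mpr h.le⟩
  have hswap : ∑ p ∈ Finset.univ.filter (fun p : Fin n × Fin n => p.2 < p.1),
      a p.1 * a p.2 = ∑ p ∈ PP n, a p.1 * a p.2 := by
    refine Finset.sum_bij' (fun p _ => Prod.swap p) (fun p _ => Prod.swap p)
      ?_ ?_ ?_ ?_ ?_
    · intro p hp; simp only [Finset.mem_filter, Finset.mem_univ, true_and] at hp ⊢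
      simpa [PP]
    · intro p hp; simp only [PP, Finset.mem_filter, Finset.mem_univ, true_and] at hp ⊢
      simpa
    · intro p _; simp
    · intro p _; simp
    · intro p _; simp [mul_comm]
  have key : (∑ i, a i) ^ 2 = (n : ℝ) + 2 * ∑ p ∈ PP n, a p.1 * a p.2 := by
    rw [e1, ← e2, hdiag, ← e3, hf1, hf2, hswap]
    ring
  have hchi : ∑ p ∈ PP n, a p.1 * a p.2 = ∑ p ∈ PP n, chi (bp p) x := by
    refine Finset.sum_congr rfl fun p hp => ?_
    have hne : p.1 ≠ p.2 := ne_of_lt (Finset.mem_filter.mp hp).2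
    rw [chi_bp p hne, pow_add]
  rw [hsum, key, hchi]
  field_simp

lemma coeff_formula {n : ℕ} (hn : 1 ≤ n) (π₁ : (Fin n → Bool) → ℝ)
    (hπ : ∀ x, π₁ x =
      ((n : ℝ) - 2 * ((∑ i, if x i then 1 else 0 : ℕ) : ℝ)) ^ 2 / (n : ℝ) ^ 2)
    (b : Fin n → Bool) :
    boolFourierCoeff π₁ b =
      (if b = (fun _ => false) then 1/(n:ℝ) else 0) +
        (2 / (n:ℝ)^2) * (((PP n).filter (fun p => bp p = b)).card : ℝ) := by
  have h2 : ((2:ℝ)^n)⁻¹ * (2:ℝ)^n = 1 := by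
    rw [inv_mul_cancel₀]; positivity
  have hx : ∀ x, π₁ x = 1/(n:ℝ) + (2/(n:ℝ)^2) * ∑ p ∈ PP n, chi (bp p) x :=
    fun x => (hπ x).trans (decomp n hn x)
  rw [boolFourierCoeff]
  have step1 : ∑ x, π₁ x * chi b x =
      (1/(n:ℝ)) * ∑ x, chi b x +
        (2/(n:ℝ)^2) * ∑ p ∈ PP n, ∑ x : Fin n → Bool, chi (bp p) x * chi b x := by
    have e : ∀ x, π₁ x * chi b x =
        1/(n:ℝ) * chi b x + (2/(n:ℝ)^2) * ∑ p ∈ PP n, chi (bp p) x * chi b x := by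
      intro x
      rw [hx x, add_mul, mul_assoc, Finset.sum_mul]
    rw [Finset.sum_congr rfl fun x _ => e x, Finset.sum_add_distrib,
      ← Finset.mul_sum, ← Finset.mul_sum]
    congr 1
    rw [Finset.sum_comm]
  rw [step1, sum_chi b]
  have step2 : ∑ p ∈ PP n, ∑ x : Fin n → Bool, chi (bp p) x * chi b x =
      (2:ℝ)^n * (((PP n).filter (fun p => bp p = b)).card : ℝ) := by
    rw [Finset.sum_congr rfl (fun p _ => sum_chi_mul (bp p) b), ← Finset.sum_filter,
      Finset.sum_const, nsmul_eq_mul]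
    ring
  rw [step2]
  by_cases hb : b = (fun _ => false)
  · rw [if_pos hb.symm, if_pos hb]
    rw [mul_add]
    congr 1
    · field_simp
    · rw [← mul_assoc, ← mul_assoc]; rw [mul_comm ((2:ℝ)^n)⁻¹ (2/(n:ℝ)^2), mul_assoc (2/(n:ℝ)^2), h2]; ring
  · rw [if_neg (fun h => hb h.symm), if_neg hb]
    rw [mul_add]
    simp only [mul_zero, zero_add, zero_mul]
    rw [← mul_assoc, ← mul_assoc]; rw [mul_comm ((2:ℝ)^n)⁻¹ (2/(n:ℝ)^2), mul_assoc (2/(n:ℝ)^2), h2]; ring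

lemma filter_empty_of_ne_two {n : ℕ} (b : Fin n → Bool)
    (hb : (∑ i, if b i then 1 else 0 : ℕ) ≠ 2) :
    (PP n).filter (fun p => bp p = b) = ∅ := by
  rw [Finset.filter_eq_empty_iff]
  intro p hp hbp
  apply hb
  rw [← hbp]
  exact weight_bp p (ne_of_lt (Finset.mem_filter.mp hp).2)

lemma filter_eq_singleton {n : ℕ} (b : Fin n → Bool) (u v : Fin n) (huv : u < v)
    (hmem : ∀ i, b i = true ↔ (i = u ∨ i = v)) :
    (PP n).filter (fun p => bp p = b) = {(u, v)} := by
  have hbp : bp (u, v) = b := by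
    funext i
    have h1 : bp (u, v) i = decide (i = u ∨ i = v) := by
      simp [bp, Bool.decide_or]
    rw [h1]
    rcases Bool.eq_false_or_eq_true (b i) with h | h
    · rw [h, decide_eq_true ((hmem i).mp h)]
    · rw [h, decide_eq_false]
      intro hc; have := (hmem i).mpr hc; rw [h] at this; exact Bool.false_ne_true this
  ext q
  simp only [Finset.mem_filter, Finset.mem_singleton, PP, Finset.mem_univ, true_and]
  constructor
  · rintro ⟨hq, hqb⟩
    exact bp_inj q (u, v) hq huv (hqb.trans hbp.symm)
  · rintro rfl; exact ⟨huv, hbp⟩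

lemma filter_card_two {n : ℕ} (b : Fin n → Bool)
    (hb : (∑ i, if b i then 1 else 0 : ℕ) = 2) :
    ((PP n).filter (fun p => bp p = b)).card = 1 := by
  have hc : (Finset.univ.filter (fun i => b i = true)).card = 2 := by
    rw [Finset.card_filter]; exact hb
  obtain ⟨u, v, huv, hS⟩ := Finset.card_eq_two.mp hc
  have hmem : ∀ i, b i = true ↔ (i = u ∨ i = v) := by
    intro i
    constructor
    · intro h
      have hi : i ∈ Finset.univ.filter (fun i => b i = true) := by
        simp [h]
      rw [hS] at hi; simpa using hi
    · intro h
      have hi : i ∈ ({u, v} : Finset (Fin n)) := by simpa using h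
      rw [← hS] at hi; exact (Finset.mem_filter.mp hi).2
  rcases lt_or_gt_of_ne huv with hlt | hgt
  · rw [filter_eq_singleton b u v hlt hmem]; simp
  · rw [filter_eq_singleton b v u hgt (fun i => (hmem i).trans or_comm)]; simp

lemma weight_zero_fun {n : ℕ} :
    (∑ i : Fin n, if (fun _ : Fin n => false) i then 1 else 0 : ℕ) = 0 := by simp

lemma chi_comm {n : ℕ} (b x : Fin n → Bool) : chi b x = chi x b := by
  simp [chi, Bool.and_comm]


lemma card_weight_two (n : ℕ) :
    Nat.card {b : Fin n → Bool // (∑ i, if b i then 1 else 0 : ℕ) = 2} = n * (n - 1) / 2 := by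
  have e : {b : Fin n → Bool // (∑ i, if b i then 1 else 0 : ℕ) = 2} ≃
      {s : Finset (Fin n) // s.card = 2} :=
    { toFun := fun b => ⟨Finset.univ.filter (fun i => b.1 i = true), by
        rw [Finset.card_filter]; exact b.2⟩
      invFun := fun s => ⟨fun i => decide (i ∈ s.1), by
        simp only [decide_eq_true_eq]
        rw [Finset.sum_ite_mem, Finset.univ_inter, Finset.sum_const, smul_eq_mul, mul_one]
        exact s.2⟩
      left_inv := fun b => Subtype.ext (funext fun i => by simp)
      right_inv := fun s => Subtype.ext (by ext i; simp) }
  rw [Nat.card_congr e, Nat.card_eq_fintype_card, Fintype.card_finset_len,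
    Fintype.card_fin, Nat.choose_two_right]

lemma sum_coeff {n : ℕ} (hn : 1 ≤ n) (π₁ : (Fin n → Bool) → ℝ)
    (hπ : ∀ x, π₁ x =
      ((n : ℝ) - 2 * ((∑ i, if x i then 1 else 0 : ℕ) : ℝ)) ^ 2 / (n : ℝ) ^ 2) :
    ∑ b, boolFourierCoeff π₁ b = 1 := by
  have hn0 : (n : ℝ) ≠ 0 := by positivity
  have h2 : ((2:ℝ)^n)⁻¹ * (2:ℝ)^n = 1 := by
    rw [inv_mul_cancel₀]; positivity
  have hzero : π₁ (fun _ => false) = 1 := by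
    rw [hπ]; simp; omega
  calc ∑ b, boolFourierCoeff π₁ b
      = ((2:ℝ)^n)⁻¹ * ∑ b : Fin n → Bool, ∑ x, π₁ x * chi b x := by
        rw [Finset.mul_sum]; rfl
    _ = ((2:ℝ)^n)⁻¹ * ∑ x : Fin n → Bool, π₁ x * ∑ b : Fin n → Bool, chi b x := by
        rw [Finset.sum_comm]
        congr 1
        exact Finset.sum_congr rfl fun x _ => (Finset.mul_sum _ _ _).symm
    _ = ((2:ℝ)^n)⁻¹ * ∑ x : Fin n → Bool,
          (if (fun _ : Fin n => false) = x then π₁ x * (2:ℝ)^n else 0) := by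
        congr 1
        refine Finset.sum_congr rfl fun x _ => ?_
        rw [Finset.sum_congr rfl fun b _ => chi_comm b x, sum_chi x, mul_ite, mul_zero]
    _ = 1 := by
        rw [Finset.sum_ite_eq, if_pos (Finset.mem_univ _), hzero, one_mul, h2]

/-- For `n ≥ 1`, the Deutsch–Jozsa output probability
`π₁(x) = (n − 2|x|)²/n²` satisfies
`π₁(x) = 1/n + (2/n²)·Σ_{i<j} (−1)^{x_i + x_j}`; hence its Fourier coefficients are
`α_0 = 1/n`, `α_b = 0` for `|b| = 1`, `α_b = 2/n²` for each of the `n(n−1)/2` strings `b`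
with `|b| = 2`, `α_b = 0` for `|b| > 2`, and its Fourier 1-norm is `L(π₁) = 1`. -/
theorem deutsch_jozsa_fourier (n : ℕ) (hn : 1 ≤ n)
    (π₁ : (Fin n → Bool) → ℝ)
    (hπ : ∀ x, π₁ x =
      ((n : ℝ) - 2 * ((∑ i, if x i then 1 else 0 : ℕ) : ℝ)) ^ 2 / (n : ℝ) ^ 2) :
    (∀ x, π₁ x = 1 / (n : ℝ) + (2 / (n : ℝ) ^ 2) *
        ∑ p ∈ Finset.univ.filter (fun p : Fin n × Fin n => p.1 < p.2),
          (-1 : ℝ) ^ ((if x p.1 then 1 else 0) + (if x p.2 then 1 else 0) : ℕ)) ∧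
    boolFourierCoeff π₁ (fun _ => false) = 1 / (n : ℝ) ∧
    (∀ b : Fin n → Bool, (∑ i, if b i then 1 else 0 : ℕ) = 1 →
      boolFourierCoeff π₁ b = 0) ∧
    (∀ b : Fin n → Bool, (∑ i, if b i then 1 else 0 : ℕ) = 2 →
      boolFourierCoeff π₁ b = 2 / (n : ℝ) ^ 2) ∧
    (∀ b : Fin n → Bool, 2 < (∑ i, if b i then 1 else 0 : ℕ) →
      boolFourierCoeff π₁ b = 0) ∧
    Nat.card {b : Fin n → Bool // (∑ i, if b i then 1 else 0 : ℕ) = 2} = n * (n - 1) / 2 ∧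
    fourierL1 π₁ = 1 := by
  have hn0 : (n : ℝ) ≠ 0 := by positivity
  have part1 : ∀ x, π₁ x = 1 / (n : ℝ) + (2 / (n : ℝ) ^ 2) *
      ∑ p ∈ Finset.univ.filter (fun p : Fin n × Fin n => p.1 < p.2),
        (-1 : ℝ) ^ ((if x p.1 then 1 else 0) + (if x p.2 then 1 else 0) : ℕ) := by
    intro x
    rw [hπ x, decomp n hn x]
    congr 1
    congr 1
    exact Finset.sum_congr rfl fun p hp =>
      chi_bp p (ne_of_lt (Finset.mem_filter.mp hp).2) x
  have nonneg : ∀ b, 0 ≤ boolFourierCoeff π₁ b := by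
    intro b
    rw [coeff_formula hn π₁ hπ b]
    apply add_nonneg
    · split <;> positivity
    · positivity
  refine ⟨part1, ?_, ?_, ?_, ?_, card_weight_two n, ?_⟩
  · rw [coeff_formula hn π₁ hπ, if_pos rfl,
      filter_empty_of_ne_two _ (by simp)]
    simp
  · intro b hb
    have hb0 : b ≠ (fun _ => false) := by
      intro h; rw [h] at hb; simp at hb
    rw [coeff_formula hn π₁ hπ, if_neg hb0,
      filter_empty_of_ne_two b (by rw [hb]; norm_num)]
    simp
  · intro b hb
    have hb0 : b ≠ (fun _ => false) := by
      intro h; rw [h] at hb; simp at hb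
    rw [coeff_formula hn π₁ hπ, if_neg hb0, filter_card_two b hb]
    simp
  · intro b hb
    have hb0 : b ≠ (fun _ => false) := by
      intro h; rw [h] at hb; simp at hb
    rw [coeff_formula hn π₁ hπ, if_neg hb0,
      filter_empty_of_ne_two b (by omega)]
    simp
  · rw [fourierL1,
      Finset.sum_congr rfl fun b _ => abs_of_nonneg (nonneg b)]
    exact sum_coeff hn π₁ hπ
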